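/- Let (X, d) be a nonempty complete metric space, ψ: X → X a contraction with ratio a ∈ (0,1), and (f_n) a sequence of contractions of X with the same ratio a such that sup_{x} d(f_n(x), ψ(x)) → 0 (or merely f_n → ψ pointwise). Then for every x₀ ∈ X, the sequence x_n := f_n ∘ ⋯ ∘ f₂ ∘ f₁(x₀) converges to the unique fixed point of ψ. -/
import Mathlib


open Filter

/-- **Nonautonomous contraction iteration (Arnaud–Humilière–Viterbo,
Prop. 3.8).**  Let `(X, d)` be a nonempty complete metric space,
`ψ : X → X` a contraction of ratio `a ∈ (0,1)`, and `(f_n)` a sequence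
of contractions of the same ratio converging to `ψ` pointwise (which is
implied by uniform convergence).  Then for every `x₀ ∈ X` the sequence
`x_n = f_n ∘ ⋯ ∘ f₂ ∘ f₁ (x₀)` converges to the unique fixed point of
`ψ`. -/
theorem nonautonomous_contraction_iteration
    {X : Type*} [MetricSpace X] [CompleteSpace X] [Nonempty X]
    (a : ℝ) (ha0 : 0 < a) (ha1 : a < 1)
    (ψ : X → X) (hψ : ∀ x y, dist (ψ x) (ψ y) ≤ a * dist x y)
    (f : ℕ → X → X) (hf : ∀ n x y, dist (f n x) (f n y) ≤ a * dist x y)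
    (hconv : ∀ z : X, Tendsto (fun n => f n z) atTop (nhds (ψ z)))
    (x₀ : X) (x : ℕ → X)
    (hx0 : x 0 = x₀) (hxs : ∀ n, x (n + 1) = f (n + 1) (x n)) :
    ∃ y : X, ψ y = y ∧ (∀ z, ψ z = z → z = y) ∧
      Tendsto x atTop (nhds y) := by
  have hcw : ContractingWith ⟨a, ha0.le⟩ ψ :=
    ⟨by exact_mod_cast ha1, LipschitzWith.of_dist_le_mul fun p q => hψ p q⟩
  set y := ContractingWith.fixedPoint ψ hcw with hy
  have hfix : ψ y = y := hcw.fixedPoint_isFixedPt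
  have huniq : ∀ z, ψ z = z → z = y := by
    intro z hz
    have h1 : dist z y ≤ a * dist z y := by
      calc dist z y = dist (ψ z) (ψ y) := by rw [hz, hfix]
        _ ≤ a * dist z y := hψ z y
    have h2 : dist z y ≤ 0 := by nlinarith [dist_nonneg (x := z) (y := y)]
    exact dist_le_zero.mp h2
  refine ⟨y, hfix, huniq, ?_⟩
  -- ε n := dist (f n y) y → 0
  have hε : Tendsto (fun n => dist (f n y) y) atTop (nhds 0) := by
    have := (hconv y).dist (tendsto_const_nhds (x := y))
    simpa [hfix] using this
  rw [Metric.tendsto_atTop]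
  intro δ hδ
  have hc : 0 < δ * (1 - a) / 2 := by nlinarith
  obtain ⟨N, hN⟩ := (Metric.tendsto_atTop.mp hε (δ * (1 - a) / 2) hc)
  have hNε : ∀ n ≥ N, dist (f n y) y < δ * (1 - a) / 2 := by
    intro n hn
    have h := hN n hn
    rwa [Real.dist_eq, sub_zero, abs_of_nonneg (dist_nonneg (x := f n y) (y := y))] at h
  have key : ∀ k, dist (x (N + k)) y ≤ a ^ k * dist (x N) y + δ / 2 := by
    intro k
    induction k with
    | zero => simp; linarith
    | succ k ih =>
      have hx' : x (N + k + 1) = f (N + k + 1) (x (N + k)) := hxs (N + k)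
      have h1 : dist (x (N + k + 1)) y ≤
          a * dist (x (N + k)) y + dist (f (N + k + 1) y) y := by
        calc dist (x (N + k + 1)) y
            ≤ dist (f (N + k + 1) (x (N + k))) (f (N + k + 1) y)
              + dist (f (N + k + 1) y) y := by
                rw [hx']; exact dist_triangle _ _ _
          _ ≤ a * dist (x (N + k)) y + dist (f (N + k + 1) y) y := by
              gcongr; exact hf _ _ _
      have h2 : dist (f (N + k + 1) y) y < δ * (1 - a) / 2 :=
        hNε _ (by omega)
      have h3 : dist (x (N + (k + 1))) y ≤
          a * dist (x (N + k)) y + δ * (1 - a) / 2 := by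
        have : N + (k + 1) = N + k + 1 := by omega
        rw [this]; linarith
      have h4 : a * dist (x (N + k)) y ≤ a * (a ^ k * dist (x N) y + δ / 2) := by
        exact mul_le_mul_of_nonneg_left ih ha0.le
      have h5 : a * (a ^ k * dist (x N) y + δ / 2)
          = a ^ (k + 1) * dist (x N) y + a * (δ / 2) := by ring
      linarith
  have htail : Tendsto (fun k => a ^ k * dist (x N) y) atTop (nhds 0) := by
    simpa using (tendsto_pow_atTop_nhds_zero_of_lt_one ha0.le ha1).mul_const (dist (x N) y)
  obtain ⟨K, hK⟩ := (Metric.tendsto_atTop.mp htail (δ / 2) (by linarith))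
  have hK' : ∀ k ≥ K, a ^ k * dist (x N) y < δ / 2 := by
    intro k hk
    have h := hK k hk
    have hnn : 0 ≤ a ^ k * dist (x N) y :=
      mul_nonneg (pow_nonneg ha0.le _) dist_nonneg
    rwa [Real.dist_eq, sub_zero, abs_of_nonneg hnn] at h
  refine ⟨N + K, fun n hn => ?_⟩
  have hrep : n = N + (n - N) := by omega
  have h1 := key (n - N)
  have h2 := hK' (n - N) (by omega)
  rw [hrep]
  linarith
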